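/- Let c, m be real numbers and define Υ(w₁,w₂,v₁,v₂) := (1 − w₁v₁)^{−c} · exp((m/2)·(w₁v₂² + 2w₂v₂ + w₂²v₁)/(1 − w₁v₁)) for real w₁, w₂, v₁, v₂ with w₁v₁ < 1. Then on this domain Υ satisfies the system of defining partial differential equations ∂Υ/∂w₁ = v₁²·∂Υ/∂v₁ + v₁v₂·∂Υ/∂v₂ + c·v₁·Υ + (m/2)·v₂²·Υ and ∂Υ/∂w₂ = v₁·∂Υ/∂v₂ + m·v₂·Υ. -/

import Mathlib

/-- The Leibniz function of the Schrödinger algebra. -/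
noncomputable def schrodingerLeibniz (c m w₁ w₂ v₁ v₂ : ℝ) : ℝ :=
  (1 - w₁ * v₁) ^ (-c) *
    Real.exp ((m / 2) * (w₁ * v₂ ^ 2 + 2 * w₂ * v₂ + w₂ ^ 2 * v₁) / (1 - w₁ * v₁))

private lemma hasDerivAt_congr {f g : ℝ → ℝ} {d e x : ℝ} (h : HasDerivAt f d x)
    (hfg : ∀ y, g y = f y) (hde : e = d) : HasDerivAt g e x := by
  rw [hde]
  exact h.congr_of_eventuallyEq (by filter_upwards with y using hfg y)

private lemma key (c : ℝ) {f g : ℝ → ℝ} {x a' b' : ℝ}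
    (hf : HasDerivAt f a' x) (hg : HasDerivAt g b' x) (hpos : 0 < f x) :
    HasDerivAt (fun y => (f y) ^ (-c) * Real.exp (g y))
      ((f x) ^ (-c) * Real.exp (g x) * (b' - c * a' / f x)) x := by
  have h1 : HasDerivAt (fun y => (f y) ^ (-c)) (a' * (-c) * (f x) ^ (-c - 1)) x :=
    hf.rpow_const (Or.inl hpos.ne')
  have h2 : HasDerivAt (fun y => Real.exp (g y)) (Real.exp (g x) * b') x := hg.exp
  have h3 := h1.mul h2
  refine HasDerivAt.congr_deriv h3 ?_
  have h4 : (f x) ^ (-c - 1) = (f x) ^ (-c) / f x := by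
    rw [Real.rpow_sub hpos, Real.rpow_one]
  rw [h4]
  field_simp
  ring

/-- The Schrödinger Leibniz function satisfies the system of defining PDEs
`∂Υ/∂w₁ = v₁²∂Υ/∂v₁ + v₁v₂∂Υ/∂v₂ + cv₁Υ + (m/2)v₂²Υ` and
`∂Υ/∂w₂ = v₁∂Υ/∂v₂ + mv₂Υ` on the domain `w₁v₁ < 1`. -/
theorem schrodinger_leibniz_pde (c m : ℝ) (w₁ w₂ v₁ v₂ : ℝ) (h : w₁ * v₁ < 1) :
    (deriv (fun w => schrodingerLeibniz c m w w₂ v₁ v₂) w₁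
      = v₁ ^ 2 * deriv (fun v => schrodingerLeibniz c m w₁ w₂ v v₂) v₁
        + v₁ * v₂ * deriv (fun v => schrodingerLeibniz c m w₁ w₂ v₁ v) v₂
        + c * v₁ * schrodingerLeibniz c m w₁ w₂ v₁ v₂
        + (m / 2) * v₂ ^ 2 * schrodingerLeibniz c m w₁ w₂ v₁ v₂) ∧
    (deriv (fun w => schrodingerLeibniz c m w₁ w v₁ v₂) w₂
      = v₁ * deriv (fun v => schrodingerLeibniz c m w₁ w₂ v₁ v) v₂
        + m * v₂ * schrodingerLeibniz c m w₁ w₂ v₁ v₂) := by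
  set A : ℝ := 1 - w₁ * v₁ with hA
  have hApos : 0 < A := by linarith
  have hAne : A ≠ 0 := hApos.ne'
  set N : ℝ := w₁ * v₂ ^ 2 + 2 * w₂ * v₂ + w₂ ^ 2 * v₁ with hN
  -- derivative in w₁
  have hfw : HasDerivAt (fun w : ℝ => 1 - w * v₁) (-v₁) w₁ := by
    simpa using ((hasDerivAt_id w₁).mul_const v₁).const_sub 1
  have hnw : HasDerivAt (fun w : ℝ => m / 2 * (w * v₂ ^ 2 + 2 * w₂ * v₂ + w₂ ^ 2 * v₁))
      (m / 2 * v₂ ^ 2) w₁ := by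
    exact hasDerivAt_congr ((((hasDerivAt_id w₁).mul_const (v₂ ^ 2)).add_const
      (2 * w₂ * v₂ + w₂ ^ 2 * v₁)).const_mul (m / 2)) (fun y => by simp only [id_eq]; try ring) (by ring)
  have hgw : HasDerivAt
      (fun w : ℝ => m / 2 * (w * v₂ ^ 2 + 2 * w₂ * v₂ + w₂ ^ 2 * v₁) / (1 - w * v₁))
      ((m / 2 * v₂ ^ 2 * A - m / 2 * N * (-v₁)) / A ^ 2) w₁ := by
    exact hnw.div hfw hAne
  have Dw₁ := (key c hfw hgw hApos).deriv
  -- derivative in v₁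
  have hfv : HasDerivAt (fun v : ℝ => 1 - w₁ * v) (-w₁) v₁ := by
    simpa using ((hasDerivAt_id v₁).const_mul w₁).const_sub 1
  have hnv : HasDerivAt (fun v : ℝ => m / 2 * (w₁ * v₂ ^ 2 + 2 * w₂ * v₂ + w₂ ^ 2 * v))
      (m / 2 * w₂ ^ 2) v₁ := by
    exact hasDerivAt_congr ((((hasDerivAt_id v₁).const_mul (w₂ ^ 2)).const_add
      (w₁ * v₂ ^ 2 + 2 * w₂ * v₂)).const_mul (m / 2)) (fun y => by simp only [id_eq]; try ring) (by ring)
  have hgv : HasDerivAt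
      (fun v : ℝ => m / 2 * (w₁ * v₂ ^ 2 + 2 * w₂ * v₂ + w₂ ^ 2 * v) / (1 - w₁ * v))
      ((m / 2 * w₂ ^ 2 * A - m / 2 * N * (-w₁)) / A ^ 2) v₁ := hnv.div hfv hAne
  have Dv₁ := (key c hfv hgv hApos).deriv
  -- derivative in v₂
  have hfv2 : HasDerivAt (fun _ : ℝ => 1 - w₁ * v₁) (0 : ℝ) v₂ := hasDerivAt_const _ _
  have hnv2 : HasDerivAt (fun v : ℝ => m / 2 * (w₁ * v ^ 2 + 2 * w₂ * v + w₂ ^ 2 * v₁))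
      (m / 2 * (w₁ * (2 * v₂) + 2 * w₂)) v₂ := by
    have h1 : HasDerivAt (fun v : ℝ => v ^ 2) (2 * v₂) v₂ := by
      simpa using hasDerivAt_pow 2 v₂
    exact hasDerivAt_congr ((((h1.const_mul w₁).add
      ((hasDerivAt_id v₂).const_mul (2 * w₂))).add_const
        (w₂ ^ 2 * v₁)).const_mul (m / 2)) (fun y => by simp only [id_eq, Pi.add_apply]; try ring) (by ring)
  have hgv2 : HasDerivAt
      (fun v : ℝ => m / 2 * (w₁ * v ^ 2 + 2 * w₂ * v + w₂ ^ 2 * v₁) / (1 - w₁ * v₁))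
      ((m / 2 * (w₁ * (2 * v₂) + 2 * w₂) * A - m / 2 * N * 0) / A ^ 2) v₂ :=
    hnv2.div hfv2 hAne
  have Dv₂ := (key c hfv2 hgv2 hApos).deriv
  -- derivative in w₂
  have hfw2 : HasDerivAt (fun _ : ℝ => 1 - w₁ * v₁) (0 : ℝ) w₂ := hasDerivAt_const _ _
  have hnw2 : HasDerivAt (fun w : ℝ => m / 2 * (w₁ * v₂ ^ 2 + 2 * w * v₂ + w ^ 2 * v₁))
      (m / 2 * (2 * v₂ + 2 * w₂ * v₁)) w₂ := by
    have h1 : HasDerivAt (fun w : ℝ => w ^ 2) (2 * w₂) w₂ := by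
      simpa using hasDerivAt_pow 2 w₂
    have h2 := ((((hasDerivAt_id w₂).const_mul (2:ℝ)).mul_const v₂).add
      (h1.mul_const v₁)).const_add (w₁ * v₂ ^ 2)
    exact hasDerivAt_congr (h2.const_mul (m / 2)) (fun y => by simp only [id_eq, Pi.add_apply]; try ring) (by ring)
  have hgw2 : HasDerivAt
      (fun w : ℝ => m / 2 * (w₁ * v₂ ^ 2 + 2 * w * v₂ + w ^ 2 * v₁) / (1 - w₁ * v₁))
      ((m / 2 * (2 * v₂ + 2 * w₂ * v₁) * A - m / 2 * (w₁ * v₂ ^ 2 + 2 * w₂ * v₂ + w₂ ^ 2 * v₁) * 0) / A ^ 2) w₂ :=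
    hnw2.div hfw2 hAne
  have Dw₂ := (key c hfw2 hgw2 hApos).deriv
  have hE : schrodingerLeibniz c m w₁ w₂ v₁ v₂
      = A ^ (-c) * Real.exp (m / 2 * N / A) := by
    simp [schrodingerLeibniz, hA, hN]
  constructor
  · rw [show (fun w => schrodingerLeibniz c m w w₂ v₁ v₂)
        = fun w => (1 - w * v₁) ^ (-c) *
          Real.exp (m / 2 * (w * v₂ ^ 2 + 2 * w₂ * v₂ + w₂ ^ 2 * v₁) / (1 - w * v₁)) from
        rfl,
      show (fun v => schrodingerLeibniz c m w₁ w₂ v v₂)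
        = fun v => (1 - w₁ * v) ^ (-c) *
          Real.exp (m / 2 * (w₁ * v₂ ^ 2 + 2 * w₂ * v₂ + w₂ ^ 2 * v) / (1 - w₁ * v)) from
        rfl,
      show (fun v => schrodingerLeibniz c m w₁ w₂ v₁ v)
        = fun v => (1 - w₁ * v₁) ^ (-c) *
          Real.exp (m / 2 * (w₁ * v ^ 2 + 2 * w₂ * v + w₂ ^ 2 * v₁) / (1 - w₁ * v₁)) from
        rfl,
      Dw₁, Dv₁, Dv₂, hE]
    simp only [← hA, ← hN]
    field_simp
    ring
  · rw [show (fun w => schrodingerLeibniz c m w₁ w v₁ v₂)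
        = fun w => (1 - w₁ * v₁) ^ (-c) *
          Real.exp (m / 2 * (w₁ * v₂ ^ 2 + 2 * w * v₂ + w ^ 2 * v₁) / (1 - w₁ * v₁)) from
        rfl,
      show (fun v => schrodingerLeibniz c m w₁ w₂ v₁ v)
        = fun v => (1 - w₁ * v₁) ^ (-c) *
          Real.exp (m / 2 * (w₁ * v ^ 2 + 2 * w₂ * v + w₂ ^ 2 * v₁) / (1 - w₁ * v₁)) from
        rfl,
      Dw₂, Dv₂, hE]
    simp only [← hA, ← hN]
    field_simp
    ring
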